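/- For each m < ω there is an M < ω such that whenever 𝒴 is a finite family of ordered pairs (X,Y) with X ⊆ 𝔹 linearly independent and Y suitable for X, and whenever a (𝒴,M)-adequate subset of 𝔹 is partitioned into two cells, one of the cells must be (𝒴,m)-adequate. -/

import Mathlib

open scoped BigOperators

attribute [local instance] Classical.propDecidable

/-- The countable Boolean group, realized as `ℕ →₀ ZMod 2` (equivalently, finite subsets
of ℕ under symmetric difference), a vector space over `𝔽₂ = ZMod 2`. -/
abbrev BoolGrp : Type := ℕ →₀ ZMod 2

/-- The set of finite sums (symmetric differences) of nonempty finite subsets of `X`. -/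
def FSset (X : Set BoolGrp) : Set BoolGrp :=
  {g | ∃ S : Finset BoolGrp, S.Nonempty ∧ ↑S ⊆ X ∧ g = ∑ v ∈ S, v}

/-- The `X`-support of `y`: for linearly independent `X` and `y` in the span of `X`,
the unique finite `S ⊆ X` with `y = ∑_{v ∈ S} v` (junk value `∅` otherwise). -/
noncomputable def Xsupp (X : Set BoolGrp) (y : BoolGrp) : Finset BoolGrp :=
  if h : ∃ S : Finset BoolGrp, ↑S ⊆ X ∧ y = ∑ v ∈ S, v then h.choose else ∅

/-- The `X`-support of a set `Y`: the union of the `X`-supports of its elements. -/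
noncomputable def XsuppSet (X Y : Set BoolGrp) : Set BoolGrp :=
  ⋃ y ∈ Y, (Xsupp X y : Set BoolGrp)

/-- An `m`-witness for the suitability of `Y` for `X`: an `m`-sequence of elements of
`Y` whose `X`-supports pairwise intersect. -/
def SuitWitness (X Y : Set BoolGrp) {m : ℕ} (y : Fin m → BoolGrp) : Prop :=
  (∀ i, y i ∈ Y) ∧ ∀ i j : Fin m, i < j →
    ((Xsupp X (y i) : Set BoolGrp) ∩ (Xsupp X (y j) : Set BoolGrp)).Nonempty

/-- `Y ⊆ FS(X)` is suitable for (linearly independent) `X` if (i) for each `m` there is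
an `m`-witness for suitability, and (ii) whenever the `X`-supports of `y, y' ∈ Y` (not
necessarily distinct) intersect, the intersection is not covered by the `X`-support of
`Y \ {y, y'}`. -/
def Suitable (X Y : Set BoolGrp) : Prop :=
  Y ⊆ FSset X ∧
  (∀ m : ℕ, ∃ y : Fin m → BoolGrp, SuitWitness X Y y) ∧
  ∀ y ∈ Y, ∀ y' ∈ Y,
    ((Xsupp X y : Set BoolGrp) ∩ (Xsupp X y' : Set BoolGrp)).Nonempty →
    (((Xsupp X y : Set BoolGrp) ∩ (Xsupp X y' : Set BoolGrp)) \
      XsuppSet X (Y \ {y, y'})).Nonempty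

/-- The set of finite sums of a finite sequence `a : Fin m → BoolGrp`. -/
def FSfin {m : ℕ} (a : Fin m → BoolGrp) : Set BoolGrp :=
  {g | ∃ s : Finset (Fin m), s.Nonempty ∧ g = ∑ j ∈ s, a j}

/-- `a` is a `(𝒴, m)`-witness for the adequacy of `A`: for each `(X, Y) ∈ 𝒴`,
`FS(a) ⊆ A ∩ FS(Y)` and there is an `m`-witness `y` for the suitability of `Y` such that
for all distinct `j, k`, `y j ∈ Y-supp(a j)` and `y j ∉ Y-supp(a k)`. -/
def AdequateWitness (𝒴 : Set (Set BoolGrp × Set BoolGrp)) (A : Set BoolGrp)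
    {m : ℕ} (a : Fin m → BoolGrp) : Prop :=
  ∀ XY ∈ 𝒴, FSfin a ⊆ A ∩ FSset XY.2 ∧
    ∃ y : Fin m → BoolGrp, SuitWitness XY.1 XY.2 y ∧
      ∀ j k : Fin m, j ≠ k → y j ∈ Xsupp XY.2 (a j) ∧ y j ∉ Xsupp XY.2 (a k)

/-- `A` is `(𝒴, m)`-adequate if there is a `(𝒴, m)`-witness for its adequacy. -/
def Adequate (𝒴 : Set (Set BoolGrp × Set BoolGrp)) (m : ℕ) (A : Set BoolGrp) : Prop :=
  ∃ a : Fin m → BoolGrp, AdequateWitness 𝒴 A a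

/-- `A` is `𝒳`-adequate if it is `(𝒴, m)`-adequate for every finite `𝒴 ⊆ 𝒳` and
every `m`. -/
def XAdequate (𝒳 : Set (Set BoolGrp × Set BoolGrp)) (A : Set BoolGrp) : Prop :=
  ∀ 𝒴 ⊆ 𝒳, 𝒴.Finite → ∀ m : ℕ, Adequate 𝒴 m A

/-- A family of pairs `(X, Y)` with each `X` linearly independent and each `Y` suitable
for `X`. -/
def GoodFamily (𝒳 : Set (Set BoolGrp × Set BoolGrp)) : Prop :=
  ∀ XY ∈ 𝒳, LinearIndependent (ZMod 2) ((↑) : XY.1 → BoolGrp) ∧ Suitable XY.1 XY.2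

section Aux

open Filter Hindman

attribute [local instance] Ultrafilter.add Ultrafilter.addSemigroup

theorem my_exists_idem {M} [AddSemigroup M] (a : Stream' M) :
    ∃ U : Ultrafilter M, U + U = U ∧ ∀ n, ∀ᶠ m in U, m ∈ FS (a.drop n) := by
  let S : Set (Ultrafilter M) := ⋂ n, { U | ∀ᶠ m in U, m ∈ FS (a.drop n) }
  have h := exists_idempotent_in_compact_add_subsemigroup ?_ S ?_ ?_ ?_
  · rcases h with ⟨U, hU, U_idem⟩
    exact ⟨U, U_idem, fun n => Set.mem_iInter.mp hU n⟩
  · exact Ultrafilter.continuous_add_left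
  · apply IsCompact.nonempty_iInter_of_sequence_nonempty_isCompact_isClosed
    · intro n U hU
      filter_upwards [hU]
      rw [← Stream'.drop_drop, ← Stream'.tail_eq_drop]
      exact fun x hx => FS.tail _ _ hx
    · intro n
      exact ⟨pure _, mem_pure.mpr <| FS.head _⟩
    · exact (ultrafilter_isClosed_basic _).isCompact
    · intro n
      apply ultrafilter_isClosed_basic
  · exact IsClosed.isCompact (isClosed_iInter fun i => ultrafilter_isClosed_basic _)
  · intro U hU V hV
    rw [Set.mem_iInter] at *
    intro n
    rw [Set.mem_setOf_eq, Ultrafilter.eventually_add]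
    filter_upwards [hU n] with m hm
    obtain ⟨n', hn⟩ := FS.add hm
    filter_upwards [hV (n + n')] with m' hm'
    apply hn
    simpa only [Stream'.drop_drop] using hm'

noncomputable def astream : Stream' BoolGrp := fun n => Finsupp.single n 1

theorem mem_FS_drop (s : Stream' BoolGrp) (g : BoolGrp) (h : g ∈ FS s) :
    ∀ k, s = astream.drop k →
      ∃ T : Finset ℕ, T.Nonempty ∧ (∀ i ∈ T, k ≤ i) ∧ g = ∑ i ∈ T, Finsupp.single i 1 := by
  induction h with
  | head' a =>
    intro k hk
    refine ⟨{k}, Finset.singleton_nonempty k, by simp, ?_⟩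
    rw [hk, Stream'.head_drop]
    simp [astream, Stream'.get]
  | tail' a m h ih =>
    intro k hk
    obtain ⟨T, h1, h2, h3⟩ := ih (k + 1) (by rw [hk]; simp)
    exact ⟨T, h1, fun i hi => le_trans (Nat.le_succ k) (h2 i hi), h3⟩
  | cons' a m h ih =>
    intro k hk
    obtain ⟨T, h1, h2, h3⟩ := ih (k + 1) (by rw [hk]; simp)
    have hkT : k ∉ T := fun hkk => by have := h2 k hkk; omega
    refine ⟨insert k T, Finset.insert_nonempty _ _, ?_, ?_⟩
    · intro i hi
      rcases Finset.mem_insert.mp hi with rfl | hi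
      · exact le_refl _
      · exact le_trans (Nat.le_succ k) (h2 i hi)
    · rw [Finset.sum_insert hkT, ← h3, hk, Stream'.head_drop]
      simp [astream, Stream'.get]

theorem sum_singles_support (T : Finset ℕ) :
    (∑ i ∈ T, Finsupp.single i (1 : ZMod 2)).support = T := by
  rw [Finsupp.support_sum_eq_biUnion]
  · simp [Finsupp.support_single_ne_zero]
  · intro i j hij
    simp only [Finsupp.support_single_ne_zero _ one_ne_zero, Finset.disjoint_singleton]
    exact hij

theorem exists_mono_unions (c : Finset ℕ → Bool) :
    ∃ (D : ℕ → Finset ℕ) (β : Bool), (∀ n, (D n).Nonempty) ∧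
      (∀ i j, i < j → ∀ x ∈ D i, ∀ y ∈ D j, x < y) ∧
      ∀ t : Finset ℕ, t.Nonempty → c (t.biUnion D) = β := by
  obtain ⟨U, hidem, htails⟩ := my_exists_idem astream
  obtain ⟨β, s₀, hs₀U, hs₀⟩ :
      ∃ (β : Bool) (s₀ : Set BoolGrp), s₀ ∈ U ∧ ∀ g ∈ s₀, c g.support = β := by
    by_cases hP : {g : BoolGrp | c g.support = true} ∈ U
    · exact ⟨true, _, hP, fun g hg => hg⟩
    · refine ⟨false, _, (Ultrafilter.compl_mem_iff_notMem).mpr hP, fun g hg => ?_⟩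
      simpa using hg
  have hstar : ∀ s ∈ U, {x | {y | x + y ∈ s} ∈ U} ∈ U := by
    intro s hs
    have h2 : ∀ᶠ x in (U + U : Ultrafilter BoolGrp), x ∈ s := by
      rw [hidem]; exact hs
    rw [Ultrafilter.eventually_add] at h2
    exact h2
  classical
  set tailSet : ℕ → Set BoolGrp := fun k => {g | g ∈ FS (astream.drop k)} with htailSet
  have htailU : ∀ k, tailSet k ∈ U := fun k => htails k
  set pickSet : Set BoolGrp × ℕ → Set BoolGrp :=
    fun p => (p.1 ∩ {x | {y | x + y ∈ p.1} ∈ U}) ∩ tailSet p.2 with hpickSet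
  set pick : Set BoolGrp × ℕ → BoolGrp :=
    fun p => if h : (pickSet p).Nonempty then h.some else 0 with hpickdef
  set step : Set BoolGrp × ℕ → Set BoolGrp × ℕ :=
    fun p => (p.1 ∩ {y | pick p + y ∈ p.1}, max p.2 (((pick p).support.sup id) + 1)) with hstepdef
  set st : ℕ → Set BoolGrp × ℕ := fun n => step^[n] (s₀, 0) with hstdef
  have hst0 : st 0 = (s₀, 0) := rfl
  have hstep : ∀ n, st (n + 1) = step (st n) := fun n => Function.iterate_succ_apply' step n _
  set b : ℕ → BoolGrp := fun n => pick (st n) with hbdef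
  have key : ∀ n, (st n).1 ∈ U := by
    intro n
    induction n with
    | zero => rw [hst0]; exact hs₀U
    | succ n ih =>
      have hps : pickSet (st n) ∈ U :=
        inter_mem (inter_mem ih (hstar _ ih)) (htailU _)
      have hpm : pick (st n) ∈ pickSet (st n) := by
        rw [hpickdef]
        simp only [dif_pos (Ultrafilter.nonempty_of_mem hps)]
        exact Set.Nonempty.some_mem _
      rw [hstep n, hstepdef]
      exact inter_mem ih hpm.1.2
  have hpick : ∀ n, b n ∈ pickSet (st n) := by
    intro n
    have hps : pickSet (st n) ∈ U :=
      inter_mem (inter_mem (key n) (hstar _ (key n))) (htailU _)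
    rw [hbdef, hpickdef]
    simp only [dif_pos (Ultrafilter.nonempty_of_mem hps)]
    exact Set.Nonempty.some_mem _
  have hbmem : ∀ n, b n ∈ (st n).1 := fun n => (hpick n).1.1
  have hbtail : ∀ n, b n ∈ FS (astream.drop (st n).2) := fun n => (hpick n).2
  have hdec : ∀ n, (st (n + 1)).1 ⊆ (st n).1 := by
    intro n; rw [hstep n, hstepdef]; exact Set.inter_subset_left
  have hdec' : ∀ n m, n ≤ m → (st m).1 ⊆ (st n).1 := by
    intro n m hnm
    induction m with
    | zero => cases Nat.le_zero.mp hnm; exact subset_rfl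
    | succ m ih =>
      rcases Nat.lt_or_ge n (m + 1) with h | h
      · exact (hdec m).trans (ih (Nat.lt_succ_iff.mp h))
      · cases Nat.le_antisymm hnm h; exact subset_rfl
  have hkmono : ∀ n m, n ≤ m → (st n).2 ≤ (st m).2 := by
    intro n m hnm
    induction m with
    | zero => cases Nat.le_zero.mp hnm; exact le_refl _
    | succ m ih =>
      rcases Nat.lt_or_ge n (m + 1) with h | h
      · refine le_trans (ih (Nat.lt_succ_iff.mp h)) ?_
        rw [hstep m, hstepdef]
        exact le_max_left _ _
      · cases Nat.le_antisymm hnm h; exact le_refl _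
  have hksup : ∀ n, ((b n).support.sup id) + 1 ≤ (st (n + 1)).2 := by
    intro n; rw [hstep n, hstepdef]; exact le_max_right _ _
  -- extract the finite sets
  have hTs : ∀ n, ∃ T : Finset ℕ, T.Nonempty ∧ (∀ i ∈ T, (st n).2 ≤ i) ∧
      b n = ∑ i ∈ T, Finsupp.single i 1 :=
    fun n => mem_FS_drop _ _ (hbtail n) _ rfl
  choose D hD1 hD2 hD3 using hTs
  have hsupp : ∀ n, (b n).support = D n := fun n => by rw [hD3 n, sum_singles_support]
  have horder : ∀ i j, i < j → ∀ x ∈ D i, ∀ y ∈ D j, x < y := by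
    intro i j hij x hx y hy
    have h1 : x ≤ (b i).support.sup id := by
      rw [hsupp i]; exact Finset.le_sup (f := id) hx
    have h2 : (st (i + 1)).2 ≤ (st j).2 := hkmono _ _ hij
    have h3 : (st j).2 ≤ y := hD2 j y hy
    have := hksup i
    omega
  have hsum : ∀ t : Finset ℕ, ∀ ht : t.Nonempty, (∑ n ∈ t, b n) ∈ (st (t.min' ht)).1 := by
    intro t
    induction t using Finset.strongInduction with
    | _ t ih =>
      intro ht
      set i := t.min' ht with hi
      rcases (t.erase i).eq_empty_or_nonempty with he | he
      · have : t = {i} := by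
          rcases (Finset.erase_eq_empty_iff t i).mp he with h | h
          · exact absurd h (Finset.nonempty_iff_ne_empty.mp ht)
          · exact h
        rw [this]
        simpa using hbmem i
      · have hsub : t.erase i ⊂ t := Finset.erase_ssubset (t.min'_mem ht)
        have hIH := ih _ hsub he
        have hmin : i + 1 ≤ (t.erase i).min' he := by
          have hmem := (t.erase i).min'_mem he
          have h1 : (t.erase i).min' he ∈ t := Finset.mem_of_mem_erase hmem
          have h2 : (t.erase i).min' he ≠ i := Finset.ne_of_mem_erase hmem
          have h3 : i ≤ (t.erase i).min' he := t.min'_le _ h1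
          omega
        have hstep' : (st (i + 1)).1 = (st i).1 ∩ {y | b i + y ∈ (st i).1} := by
          rw [hstep i, hstepdef]
        have hIn : (∑ n ∈ t.erase i, b n) ∈ (st (i + 1)).1 := hdec' _ _ hmin hIH
        rw [hstep'] at hIn
        have : b i + ∑ n ∈ t.erase i, b n ∈ (st i).1 := hIn.2
        rwa [Finset.add_sum_erase _ _ (t.min'_mem ht)] at this
  refine ⟨D, β, hD1, horder, ?_⟩
  intro t ht
  have hmem : (∑ n ∈ t, b n) ∈ s₀ := by
    have := hdec' 0 _ (Nat.zero_le _) (hsum t ht)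
    rwa [hst0] at this
  have hsupport : (∑ n ∈ t, b n).support = t.biUnion D := by
    rw [Finsupp.support_sum_eq_biUnion]
    · exact Finset.biUnion_congr rfl fun n _ => hsupp n
    · intro i j hij
      rw [hsupp i, hsupp j, Finset.disjoint_left]
      intro x hxi hxj
      rcases Nat.lt_or_ge i j with h | h
      · exact absurd (horder i j h x hxi x hxj) (lt_irrefl x)
      · have hji : j < i := lt_of_le_of_ne h (Ne.symm hij)
        exact absurd (horder j i hji x hxj x hxi) (lt_irrefl x)
  have := hs₀ _ hmem
  rwa [hsupport] at this

theorem finite_unions (m : ℕ) :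
    ∃ M : ℕ, ∀ c : Finset ℕ → Bool, ∃ D : Fin m → Finset ℕ,
      (∀ j, (D j).Nonempty ∧ ∀ x ∈ D j, x < M) ∧
      (∀ j k : Fin m, j ≠ k → Disjoint (D j) (D k)) ∧
      ∃ β : Bool, ∀ s : Finset (Fin m), s.Nonempty → c (s.biUnion D) = β := by
  by_contra hcon
  push_neg at hcon
  choose cM hcM using hcon
  set U := (Filter.hyperfilter ℕ : Ultrafilter ℕ) with hU
  set c : Finset ℕ → Bool := fun S => if {M | cM M S = true} ∈ U then true else false with hcdef
  have hc : ∀ S, {M | cM M S = c S} ∈ U := by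
    intro S
    by_cases h : {M | cM M S = true} ∈ U
    · have : c S = true := by rw [hcdef]; simp [h]
      rw [this]; exact h
    · have hcf : c S = false := by rw [hcdef]; simp [h]
      rw [hcf]
      have := (Ultrafilter.compl_mem_iff_notMem).mpr h
      convert this using 1
      ext M
      simp
  obtain ⟨D, β, hD1, hord, hmono⟩ := exists_mono_unions c
  set D' : Fin m → Finset ℕ := fun j => D j with hD'def
  set M₀ := ((Finset.range m).biUnion D).sup id + 1 with hM₀
  have hbound : ∀ j : Fin m, ∀ x ∈ D' j, x < M₀ := by
    intro j x hx
    have : x ∈ (Finset.range m).biUnion D :=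
      Finset.mem_biUnion.mpr ⟨j, Finset.mem_range.mpr j.isLt, hx⟩
    have := Finset.le_sup (f := id) this
    simp only [id_eq] at this
    omega
  have hdisj : ∀ j k : Fin m, j ≠ k → Disjoint (D' j) (D' k) := by
    intro j k hjk
    rw [Finset.disjoint_left]
    intro x hxj hxk
    have hne : (j : ℕ) ≠ (k : ℕ) := fun h => hjk (Fin.ext h)
    rcases Nat.lt_or_ge (j : ℕ) (k : ℕ) with h | h
    · exact absurd (hord _ _ h x hxj x hxk) (lt_irrefl x)
    · exact absurd (hord _ _ (lt_of_le_of_ne h (Ne.symm hne)) x hxk x hxj) (lt_irrefl x)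
  have hgood : ∀ s : Finset (Fin m),
      {M | s.Nonempty → cM M (s.biUnion D') = β} ∈ U := by
    intro s
    rcases s.eq_empty_or_nonempty with rfl | hs
    · have he : {M | (∅ : Finset (Fin m)).Nonempty → cM M (Finset.biUnion ∅ D') = β} = Set.univ := by
        ext M; simp
      rw [he]; exact Filter.univ_mem
    · have ht : (s.image Fin.val).Nonempty := hs.image _
      have hEq : (s.image Fin.val).biUnion D = s.biUnion D' := Finset.image_biUnion
      have hcu : c (s.biUnion D') = β := by rw [← hEq]; exact hmono _ ht
      have := hc (s.biUnion D')
      filter_upwards [this] with M hM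
      intro _
      rw [hM, hcu]
  have hbig : {M | M₀ ≤ M} ∈ U := by
    apply Filter.mem_hyperfilter_of_finite_compl
    have : {M : ℕ | M₀ ≤ M}ᶜ = {M : ℕ | M < M₀} := by ext M; simp
    rw [this]
    exact Set.finite_lt_nat M₀
  have hall : (⋂ s : Finset (Fin m), {M | s.Nonempty → cM M (s.biUnion D') = β}) ∈ U :=
    (Filter.iInter_mem).mpr hgood
  obtain ⟨M, hM⟩ := Ultrafilter.nonempty_of_mem (Filter.inter_mem hbig hall)
  have hMbig : M₀ ≤ M := hM.1
  have hMall : ∀ s : Finset (Fin m), s.Nonempty → cM M (s.biUnion D') = β := by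
    intro s hs
    exact Set.mem_iInter.mp hM.2 s hs
  obtain ⟨s, hs, hsne⟩ := hcM M D'
    (fun j => ⟨hD1 j, fun x hx => lt_of_lt_of_le (hbound j x hx) hMbig⟩) hdisj β
  exact hsne (hMall s hs)


theorem zmod2_cases : ∀ x : ZMod 2, x = 0 ∨ x = 1 := by decide

theorem boolgrp_add_self (x : BoolGrp) : x + x = 0 := by
  ext n
  have h2 : (2 : ZMod 2) = 0 := by decide
  simp only [Finsupp.add_apply, Finsupp.coe_zero, Pi.zero_apply]
  have : x n + x n = 2 * x n := by ring
  rw [this, h2, zero_mul]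

theorem indep_combo_zero {X : Set BoolGrp}
    (hX : LinearIndependent (ZMod 2) ((↑) : X → BoolGrp))
    (V : Finset BoolGrp) (hV : ↑V ⊆ X) (f : BoolGrp → ZMod 2)
    (h : ∑ v ∈ V, f v • v = 0) : ∀ v ∈ V, f v = 0 := by
  classical
  set f' : BoolGrp → ZMod 2 := fun v => if v ∈ V then f v else 0 with hf'
  have hfne : ∀ a : BoolGrp, f' a ≠ 0 → a ∈ V := by
    intro a ha
    by_contra hna
    exact ha (by simp [hf', hna])
  set l : BoolGrp →₀ ZMod 2 := Finsupp.onFinset V f' hfne with hl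
  have hsupp : l ∈ Finsupp.supported (ZMod 2) (ZMod 2) X := by
    rw [Finsupp.mem_supported]
    refine subset_trans ?_ hV
    exact_mod_cast Finsupp.support_onFinset_subset
  have hl0 : Finsupp.linearCombination (ZMod 2) id l = 0 := by
    rw [Finsupp.linearCombination_apply, Finsupp.sum]
    have h1 : ∑ a ∈ l.support, l a • id a = ∑ a ∈ V, l a • id a :=
      Finset.sum_subset Finsupp.support_onFinset_subset
        (fun x _ hnx => by simp [Finsupp.notMem_support_iff.mp hnx])
    rw [h1]
    have h2 : ∑ a ∈ V, l a • id a = ∑ v ∈ V, f v • v :=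
      Finset.sum_congr rfl (fun v hv => by simp [hl, Finsupp.onFinset_apply, hf', hv])
    rw [h2, h]
  have hz : l = 0 := (linearIndependent_subtype_iff.trans linearIndepOn_iff).mp hX l hsupp hl0
  intro v hv
  have : l v = 0 := by rw [hz]; rfl
  simpa [hl, Finsupp.onFinset_apply, hf', hv] using this

theorem sum_inj {X : Set BoolGrp}
    (hX : LinearIndependent (ZMod 2) ((↑) : X → BoolGrp))
    {S T : Finset BoolGrp} (hS : ↑S ⊆ X) (hT : ↑T ⊆ X)
    (h : ∑ v ∈ S, v = ∑ v ∈ T, v) : S = T := by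
  classical
  set f : BoolGrp → ZMod 2 :=
    fun v => (if v ∈ S then (1 : ZMod 2) else 0) + (if v ∈ T then (1 : ZMod 2) else 0) with hf
  have hsum : ∑ v ∈ S ∪ T, f v • v = 0 := by
    have e1 : ∀ (W : Finset BoolGrp), W ⊆ S ∪ T →
        ∑ v ∈ S ∪ T, (if v ∈ W then (1 : ZMod 2) else 0) • v = ∑ v ∈ W, v := by
      intro W hW
      rw [Finset.sum_congr rfl (fun v _ => by rw [ite_smul, one_smul, zero_smul]),
        Finset.sum_ite_mem, Finset.inter_eq_right.mpr hW]
    have : ∑ v ∈ S ∪ T, f v • v =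
        (∑ v ∈ S ∪ T, (if v ∈ S then (1 : ZMod 2) else 0) • v) +
        (∑ v ∈ S ∪ T, (if v ∈ T then (1 : ZMod 2) else 0) • v) := by
      rw [← Finset.sum_add_distrib]
      exact Finset.sum_congr rfl (fun v _ => by rw [hf, add_smul])
    rw [this, e1 S Finset.subset_union_left, e1 T Finset.subset_union_right, h,
      boolgrp_add_self]
  have hUX : ↑(S ∪ T) ⊆ X := by
    rw [Finset.coe_union]
    exact Set.union_subset hS hT
  have hz := indep_combo_zero hX (S ∪ T) hUX f hsum
  ext v
  constructor
  · intro hv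
    have h0 := hz v (Finset.mem_union_left _ hv)
    rw [hf] at h0
    simp only [if_pos hv] at h0
    by_contra hnv
    rw [if_neg hnv] at h0
    exact absurd h0 (by decide)
  · intro hv
    have h0 := hz v (Finset.mem_union_right _ hv)
    rw [hf] at h0
    simp only [if_pos hv] at h0
    by_contra hnv
    rw [if_neg hnv] at h0
    exact absurd h0 (by decide)

theorem Xsupp_spec {X : Set BoolGrp} {y : BoolGrp}
    (h : ∃ S : Finset BoolGrp, ↑S ⊆ X ∧ y = ∑ v ∈ S, v) :
    ↑(Xsupp X y) ⊆ X ∧ y = ∑ v ∈ Xsupp X y, v := by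
  rw [Xsupp, dif_pos h]
  exact h.choose_spec

theorem Xsupp_eq {X : Set BoolGrp}
    (hX : LinearIndependent (ZMod 2) ((↑) : X → BoolGrp))
    {y : BoolGrp} {S : Finset BoolGrp} (hS : ↑S ⊆ X) (hy : y = ∑ v ∈ S, v) :
    Xsupp X y = S := by
  obtain ⟨h1, h2⟩ := Xsupp_spec ⟨S, hS, hy⟩
  exact sum_inj hX h1 hS (by rw [← h2, hy])

theorem double_sum {ι : Type*} (T : Finset ι) (S : ι → Finset BoolGrp) :
    ∑ i ∈ T, ∑ v ∈ S i, v =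
      ∑ v ∈ T.biUnion S, (((T.filter (fun i => v ∈ S i)).card : ZMod 2)) • v := by
  classical
  have h1 : ∀ v, (((T.filter (fun i => v ∈ S i)).card : ZMod 2)) • v =
      ∑ i ∈ T, (if v ∈ S i then v else 0) := by
    intro v
    rw [Finset.card_eq_sum_ones, Nat.cast_sum, Finset.sum_smul]
    rw [Finset.sum_filter]
    exact Finset.sum_congr rfl (fun i _ => by split <;> simp
    )
  rw [Finset.sum_congr rfl (fun v _ => h1 v), Finset.sum_comm]
  refine Finset.sum_congr rfl (fun i hi => ?_)
  rw [Finset.sum_ite_mem, Finset.inter_eq_right.mpr (fun v hv => Finset.mem_biUnion.mpr ⟨i, hi, hv⟩)]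

theorem combo_filter (V : Finset BoolGrp) (c : BoolGrp → ZMod 2) :
    ∑ v ∈ V, c v • v = ∑ v ∈ V.filter (fun v => c v = 1), v := by
  classical
  rw [Finset.sum_filter]
  refine Finset.sum_congr rfl (fun v _ => ?_)
  rcases zmod2_cases (c v) with h | h <;> simp [h]

theorem mem_FSset_Xsupp {X : Set BoolGrp}
    (hX : LinearIndependent (ZMod 2) ((↑) : X → BoolGrp))
    {y : BoolGrp} (hy : y ∈ FSset X) :
    (Xsupp X y).Nonempty ∧ ↑(Xsupp X y) ⊆ X ∧ y = ∑ v ∈ Xsupp X y, v := by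
  obtain ⟨S, hSne, hSX, hSy⟩ := hy
  have := Xsupp_eq hX hSX hSy
  rw [this]
  exact ⟨hSne, hSX, hSy⟩

theorem suitable_linearIndependent {X Y : Set BoolGrp}
    (hX : LinearIndependent (ZMod 2) ((↑) : X → BoolGrp))
    (hS : Suitable X Y) :
    LinearIndependent (ZMod 2) ((↑) : Y → BoolGrp) := by
  rw [linearIndependent_subtype_iff, linearIndepOn_iff]
  intro l hl hl0
  by_contra hne
  obtain ⟨y₀, hy₀⟩ := Finsupp.support_nonempty_iff.mpr hne
  have hlY : ↑l.support ⊆ Y := Finsupp.mem_supported _ l |>.mp hl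
  set T := l.support with hT
  have hTY : ∀ y ∈ T, y ∈ Y := fun y hy => hlY hy
  -- canonical supports
  have hrep : ∀ y ∈ T, ↑(Xsupp X y) ⊆ X ∧ y = ∑ v ∈ Xsupp X y, v := by
    intro y hy
    obtain ⟨S, _, hSX, hSy⟩ := hS.1 (hTY y hy)
    exact Xsupp_spec ⟨S, hSX, hSy⟩
  have hcombo : Finsupp.linearCombination (ZMod 2) id l = ∑ y ∈ T, y := by
    rw [Finsupp.linearCombination_apply, Finsupp.sum]
    refine Finset.sum_congr rfl (fun y hy => ?_)
    rcases zmod2_cases (l y) with h | h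
    · exact absurd h (Finsupp.mem_support_iff.mp hy)
    · simp [h]
  have hexp : ∑ y ∈ T, y = ∑ y ∈ T, ∑ v ∈ Xsupp X y, v :=
    Finset.sum_congr rfl (fun y hy => (hrep y hy).2)
  set V := T.biUnion (fun y => Xsupp X y) with hV
  have hVX : ↑V ⊆ X := by
    intro v hv
    obtain ⟨y, hy, hvy⟩ := Finset.mem_biUnion.mp hv
    exact (hrep y hy).1 hvy
  have hzero : ∑ v ∈ V, (((T.filter (fun i => v ∈ Xsupp X i)).card : ZMod 2)) • v = 0 := by
    rw [← double_sum, ← hexp, ← hcombo, hl0]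
  have hcard := indep_combo_zero hX V hVX _ hzero
  -- private element of y₀
  have hy₀Y : y₀ ∈ Y := hTY y₀ hy₀
  have hy₀FS := mem_FSset_Xsupp hX (hS.1 hy₀Y)
  have hinter : ((Xsupp X y₀ : Set BoolGrp) ∩ (Xsupp X y₀ : Set BoolGrp)).Nonempty := by
    rw [Set.inter_self]
    obtain ⟨x, hx⟩ := hy₀FS.1
    exact ⟨x, hx⟩
  obtain ⟨x, hx⟩ := hS.2.2 y₀ hy₀Y y₀ hy₀Y hinter
  rw [Set.inter_self] at hx
  obtain ⟨hx1, hx2⟩ := hx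
  -- x is only in the support of y₀ among T
  have hfilter : T.filter (fun i => x ∈ Xsupp X i) = {y₀} := by
    apply Finset.eq_singleton_iff_unique_mem.mpr
    constructor
    · exact Finset.mem_filter.mpr ⟨hy₀, by exact_mod_cast hx1⟩
    · intro y hy
      obtain ⟨hyT, hyx⟩ := Finset.mem_filter.mp hy
      by_contra hyne
      apply hx2
      refine Set.mem_biUnion (?_ : y ∈ Y \ {y₀, y₀}) (by exact_mod_cast hyx)
      refine ⟨hTY y hyT, ?_⟩
      simp [hyne]
  have hxV : x ∈ V := Finset.mem_biUnion.mpr ⟨y₀, hy₀, by exact_mod_cast hx1⟩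
  have := hcard x hxV
  rw [hfilter] at this
  simp at this

end Aux

/-- For each `m` there is an `M` such that whenever `𝒴` is a finite family of pairs
`(X, Y)` with `X` linearly independent and `Y` suitable for `X`, and a `(𝒴, M)`-adequate
set is partitioned into two cells, one of the cells is `(𝒴, m)`-adequate. -/

theorem adequate_partition_finitary :
    ∀ m : ℕ, ∃ M : ℕ, ∀ 𝒴 : Set (Set BoolGrp × Set BoolGrp), 𝒴.Finite → GoodFamily 𝒴 →
      ∀ A A₀ A₁ : Set BoolGrp, Adequate 𝒴 M A → A = A₀ ∪ A₁ →
        Adequate 𝒴 m A₀ ∨ Adequate 𝒴 m A₁ := by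
  intro m
  obtain ⟨M, hM⟩ := finite_unions m
  refine ⟨M, ?_⟩
  intro 𝒴 _ h𝒴good A A₀ A₁ hA hpart
  obtain ⟨a, ha⟩ := hA
  classical
  set aext : ℕ → BoolGrp := fun i => if h : i < M then a ⟨i, h⟩ else 0 with haext
  set c : Finset ℕ → Bool :=
    fun S => if (∑ i ∈ S, aext i) ∈ A₀ then true else false with hc
  obtain ⟨D, hDprop, hDdisj, β, hβ⟩ := hM c
  set b : Fin m → BoolGrp := fun j => ∑ i ∈ D j, aext i with hb
  have hsum : ∀ s : Finset (Fin m), ∑ j ∈ s, b j = ∑ i ∈ s.biUnion D, aext i := by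
    intro s
    rw [Finset.sum_biUnion (fun j _ k _ hjk => hDdisj j k hjk)]
  have hTbound : ∀ s : Finset (Fin m), ∀ x ∈ s.biUnion D, x < M := by
    intro s x hx
    obtain ⟨j, _, hxj⟩ := Finset.mem_biUnion.mp hx
    exact (hDprop j).2 x hxj
  have hTne : ∀ s : Finset (Fin m), s.Nonempty → (s.biUnion D).Nonempty := by
    rintro s ⟨j, hj⟩
    obtain ⟨x, hx⟩ := (hDprop j).1
    exact ⟨x, Finset.mem_biUnion.mpr ⟨j, hj, hx⟩⟩
  have hconv : ∀ T : Finset ℕ, T.Nonempty → ∀ hbd : (∀ x ∈ T, x < M),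
      (∑ i ∈ T, aext i) ∈ FSfin a := by
    intro T hT hbd
    refine ⟨T.attachFin hbd, ?_, ?_⟩
    · rw [← Finset.card_pos, Finset.card_attachFin]
      exact hT.card_pos
    · refine (Finset.sum_bij' (fun (j : Fin M) (_ : j ∈ T.attachFin hbd) => (j : ℕ))
        (fun i (hi : i ∈ T) => (⟨i, hbd i hi⟩ : Fin M)) ?_ ?_ ?_ ?_ ?_).symm
      · intro x hx
        exact (Finset.mem_attachFin hbd).mp hx
      · intro x hx
        exact (Finset.mem_attachFin hbd).mpr hx
      · intro x hx
        rfl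
      · intro x hx
        rfl
      · intro x hx
        have hxM : (x : ℕ) < M := x.isLt
        rw [haext]
        simp only [dif_pos hxM]
  have hwit : ∀ C : Set BoolGrp,
      (∀ s : Finset (Fin m), s.Nonempty → (∑ j ∈ s, b j) ∈ A → (∑ j ∈ s, b j) ∈ C) →
      AdequateWitness 𝒴 C b := by
    intro C hC XY hXY
    obtain ⟨hXind, hsuit⟩ := h𝒴good XY hXY
    obtain ⟨hFSa, ya, hya_suit, hya⟩ := ha XY hXY
    have hYind := suitable_linearIndependent hXind hsuit
    have hmem : ∀ s : Finset (Fin m), s.Nonempty → (∑ j ∈ s, b j) ∈ A ∩ FSset XY.2 := by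
      intro s hs
      have h1 : (∑ j ∈ s, b j) ∈ FSfin a := by
        rw [hsum]
        exact hconv _ (hTne s hs) (hTbound s)
      exact hFSa h1
    constructor
    · rintro g ⟨s, hs, rfl⟩
      exact ⟨hC s hs (hmem s hs).1, (hmem s hs).2⟩
    · set r : Fin m → Fin M := fun j =>
        ⟨(D j).min' (hDprop j).1, (hDprop j).2 _ ((D j).min'_mem (hDprop j).1)⟩ with hr
      have hrD : ∀ j, ((r j) : ℕ) ∈ D j := fun j => (D j).min'_mem (hDprop j).1
      have hrne : ∀ j k, j ≠ k → ∀ i ∈ D k, ((r j) : ℕ) ≠ i := by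
        intro j k hjk i hi heq
        exact (Finset.disjoint_left.mp (hDdisj j k hjk) (heq ▸ hrD j)) hi
      have hrjk : ∀ j k, j ≠ k → r j ≠ r k := by
        intro j k hjk h
        exact hrne j k hjk _ (hrD k) (by rw [h])
      have haextval : ∀ i : ℕ, ∀ h : i < M, aext i = a ⟨i, h⟩ := by
        intro i h
        rw [haext]
        simp only [dif_pos h]
      have haFS : ∀ i : Fin M, a i ∈ FSset XY.2 := by
        intro i
        have h1 : a i ∈ FSfin a := ⟨{i}, Finset.singleton_nonempty i, by simp⟩
        exact (hFSa h1).2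
      have hSS : ∀ i : ℕ, i < M →
          ↑(Xsupp XY.2 (aext i)) ⊆ XY.2 ∧ aext i = ∑ v ∈ Xsupp XY.2 (aext i), v := by
        intro i hi
        obtain ⟨S, _, hs1, hs2⟩ := haFS ⟨i, hi⟩
        exact Xsupp_spec ⟨S, hs1, by rw [haextval i hi]; exact hs2⟩
      have hbsupp : ∀ j : Fin m, Xsupp XY.2 (b j) =
          ((D j).biUnion (fun i => Xsupp XY.2 (aext i))).filter
            (fun v => (((D j).filter (fun i => v ∈ Xsupp XY.2 (aext i))).card : ZMod 2) = 1) := by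
        intro j
        refine Xsupp_eq hYind ?_ ?_
        · intro v hv
          rw [Finset.mem_coe, Finset.mem_filter] at hv
          obtain ⟨i, hiD, hiv⟩ := Finset.mem_biUnion.mp hv.1
          exact (hSS i ((hDprop j).2 i hiD)).1 hiv
        · rw [hb]
          calc ∑ i ∈ D j, aext i = ∑ i ∈ D j, ∑ v ∈ Xsupp XY.2 (aext i), v :=
                Finset.sum_congr rfl (fun i hi => (hSS i ((hDprop j).2 i hi)).2)
            _ = ∑ v ∈ (D j).biUnion (fun i => Xsupp XY.2 (aext i)),
                  (((D j).filter (fun i => v ∈ Xsupp XY.2 (aext i))).card : ZMod 2) • v :=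
                double_sum _ _
            _ = _ := by
                rw [combo_filter]
      refine ⟨fun j => ya (r j), ⟨fun j => hya_suit.1 (r j), ?_⟩, ?_⟩
      · intro i j hij
        rcases lt_or_gt_of_ne (hrjk i j (ne_of_lt hij)) with h | h
        · exact hya_suit.2 _ _ h
        · rw [Set.inter_comm]
          exact hya_suit.2 _ _ h
      · intro j k hjk
        have hyaj := hya (r j) (r k) (hrjk j k hjk)
        have hyarj : ya (r j) ∈ Xsupp XY.2 (aext ((r j) : ℕ)) := by
          rw [haextval _ (r j).isLt]
          have : (⟨((r j) : ℕ), (r j).isLt⟩ : Fin M) = r j := by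
            apply Fin.ext
            rfl
          rw [this]
          exact hyaj.1
        have hyanot : ∀ i : ℕ, ∀ h : i < M, (⟨i, h⟩ : Fin M) ≠ r j →
            ya (r j) ∉ Xsupp XY.2 (aext i) := by
          intro i h hne
          rw [haextval i h]
          exact (hya (r j) ⟨i, h⟩ (Ne.symm hne)).2
        constructor
        · rw [hbsupp j]
          refine Finset.mem_filter.mpr ⟨Finset.mem_biUnion.mpr ⟨_, hrD j, hyarj⟩, ?_⟩
          have hfil : (D j).filter (fun i => ya (r j) ∈ Xsupp XY.2 (aext i)) = {((r j) : ℕ)} := by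
            apply Finset.eq_singleton_iff_unique_mem.mpr
            refine ⟨Finset.mem_filter.mpr ⟨hrD j, hyarj⟩, ?_⟩
            intro i hi
            obtain ⟨hiD, hix⟩ := Finset.mem_filter.mp hi
            by_contra hne'
            have hiM : i < M := (hDprop j).2 i hiD
            refine hyanot i hiM ?_ hix
            intro heq
            exact hne' (by rw [← heq])
          rw [hfil]
          simp
        · rw [hbsupp k]
          intro hmem'
          obtain ⟨hbi, _⟩ := Finset.mem_filter.mp hmem'
          obtain ⟨i, hiD, hix⟩ := Finset.mem_biUnion.mp hbi
          have hiM : i < M := (hDprop k).2 i hiD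
          refine hyanot i hiM ?_ hix
          intro heq
          exact hrne j k hjk i hiD (by rw [← heq])
  cases hβcase : β
  · right
    refine ⟨b, hwit A₁ ?_⟩
    intro s hs hmemA
    have hcfalse : c (s.biUnion D) = false := by rw [hβ s hs, hβcase]
    have hnotA₀ : (∑ j ∈ s, b j) ∉ A₀ := by
      rw [hsum]
      intro hmem0
      rw [hc] at hcfalse
      simp only [if_pos hmem0] at hcfalse
      exact Bool.noConfusion hcfalse
    rw [hpart] at hmemA
    rcases hmemA with h | h
    · exact absurd h hnotA₀
    · exact h
  · left
    refine ⟨b, hwit A₀ ?_⟩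
    intro s hs _
    have hctrue : c (s.biUnion D) = true := by rw [hβ s hs, hβcase]
    rw [hc] at hctrue
    rw [hsum]
    by_contra h0
    simp only [if_neg h0] at hctrue
    exact Bool.noConfusion hctrue
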